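/- For all real λ > 0 and θ > 0, let s⋆ = (2/θ)·log((θ + √(4λ² + θ²))/(2λ)). Then s⋆ > 0 and (λ/θ)·(1 - exp(-θ·s⋆)) + 2·(1 - exp(-θ·s⋆/2)) = 2 - exp(-θ·s⋆/2). -/

import Mathlib

/-- Crossing time of the continuation value and the stopping value in the prophet
IID analysis: with `s⋆ = (2/θ) log((θ + √(4λ² + θ²))/(2λ))`, one has `s⋆ > 0` and
`(λ/θ)(1 - e^{-θs⋆}) + 2(1 - e^{-θs⋆/2}) = 2 - e^{-θs⋆/2}`. -/
theorem stmt_17 (lam θ : ℝ) (hlam : 0 < lam) (hθ : 0 < θ)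
    (s : ℝ)
    (hs : s = (2 / θ) * Real.log ((θ + Real.sqrt (4 * lam ^ 2 + θ ^ 2)) / (2 * lam))) :
    0 < s ∧
    (lam / θ) * (1 - Real.exp (-θ * s)) + 2 * (1 - Real.exp (-θ * s / 2)) =
      2 - Real.exp (-θ * s / 2) := by
  set R := Real.sqrt (4 * lam ^ 2 + θ ^ 2) with hRdef
  have hQ : (0:ℝ) ≤ 4 * lam ^ 2 + θ ^ 2 := by positivity
  have hR2 : R ^ 2 = 4 * lam ^ 2 + θ ^ 2 := Real.sq_sqrt hQ
  have hRgt : 2 * lam < R := by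
    nlinarith [Real.sqrt_nonneg (4 * lam ^ 2 + θ ^ 2), hR2, sq_nonneg (R - 2 * lam)]
  have hden : 0 < 2 * lam := by linarith
  have hratio : 1 < (θ + R) / (2 * lam) := by
    rw [lt_div_iff₀ hden]; linarith
  have hlog : 0 < Real.log ((θ + R) / (2 * lam)) := Real.log_pos hratio
  have hspos : 0 < s := by
    rw [hs]; positivity
  refine ⟨hspos, ?_⟩
  have hhalf : -θ * s / 2 = -Real.log ((θ + R) / (2 * lam)) := by
    rw [hs]; field_simp
  have hx : Real.exp (-θ * s / 2) = (2 * lam) / (θ + R) := by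
    rw [hhalf, Real.exp_neg, Real.exp_log (by linarith : (0:ℝ) < (θ + R) / (2 * lam))]
    rw [inv_div]
  have hfull : Real.exp (-θ * s) = ((2 * lam) / (θ + R)) ^ 2 := by
    have : -θ * s = 2 * (-θ * s / 2) := by ring
    rw [this, two_mul, Real.exp_add, hx]; ring
  rw [hfull, hx]
  have hθR : (0:ℝ) < θ + R := by linarith
  have hkey : lam * (1 - (2 * lam / (θ + R)) ^ 2) = θ * (2 * lam / (θ + R)) := by
    field_simp
    linear_combination hR2
  have hdiv : lam / θ * (1 - (2 * lam / (θ + R)) ^ 2) = 2 * lam / (θ + R) := by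
    rw [div_mul_eq_mul_div, hkey]
    field_simp
  linarith [hdiv]
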